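/- Let H be a strongly primary monoid. For every atom u ∈ H, the local tame degree satisfies t(u) ≤ ρ_{ω(u)}(H). Hence, if ρ_{ω(u)}(H) < ∞ for every atom u ∈ H, then H is locally tame. -/

import Mathlib

open Pointwise

section MonoidDefs

variable {G : Type*} [CommGroup G]

/-- `x` is a unit of the submonoid `H`. -/
def IsHUnit (H : Submonoid G) (x : G) : Prop := x ∈ H ∧ x⁻¹ ∈ H

/-- The set of non-units of `H`. -/
def nonUnits (H : Submonoid G) : Set G := {x | x ∈ H ∧ x⁻¹ ∉ H}

/-- `u` is an atom (irreducible element) of `H`. -/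
def IsHAtom (H : Submonoid G) (u : G) : Prop :=
  u ∈ H ∧ ¬ IsHUnit H u ∧
    ∀ a b : G, a ∈ H → b ∈ H → u = a * b → IsHUnit H a ∨ IsHUnit H b

/-- `G` is the quotient group of `H`. -/
def IsQuotientGroup (H : Submonoid G) : Prop :=
  ∀ g : G, ∃ a ∈ H, ∃ b ∈ H, g = a / b

/-- `H` is a primary monoid. -/
def IsPrimaryMonoid (H : Submonoid G) : Prop :=
  (nonUnits H).Nonempty ∧
    ∀ a ∈ nonUnits H, ∀ b ∈ nonUnits H, ∃ n : ℕ, 0 < n ∧ b ^ n ∈ a • (H : Set G)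

/-- `H` is a strongly primary monoid. -/
def IsStronglyPrimary (H : Submonoid G) : Prop :=
  (nonUnits H).Nonempty ∧
    ∀ a ∈ nonUnits H, ∃ n : ℕ, 0 < n ∧ nonUnits H ^ n ⊆ a • (H : Set G)

/-- `x` and `y` are associated in `H`. -/
def HAssoc (H : Submonoid G) (x y : G) : Prop := IsHUnit H (x / y)

/-- The set of lengths of `a`: all `k` such that `a` is a product of `k` atoms
(up to a unit of `H`). -/
def lengthSet (H : Submonoid G) (a : G) : Set ℕ :=
  {k | ∃ s : Multiset G, Multiset.card s = k ∧ (∀ v ∈ s, IsHAtom H v) ∧ HAssoc H a s.prod}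

/-- `Λ(S)`, the supremum of the minimal factorization lengths of elements of `S`. -/
noncomputable def Lambda (H : Submonoid G) (S : Set G) : ℕ∞ :=
  ⨆ (a : G) (_ : a ∈ S) (_ : (lengthSet H a).Nonempty), ((sInf (lengthSet H a) : ℕ) : ℕ∞)

/-- `ρ_k(H)`, the supremum of `sup L(a)` over all `a` with `k ∈ L(a)`. -/
noncomputable def rho (H : Submonoid G) (k : ℕ∞) : ℕ∞ :=
  ⨆ (a : G) (_ : a ∈ H) (_ : ∃ n ∈ lengthSet H a, (n : ℕ∞) = k),
    ⨆ (n : ℕ) (_ : n ∈ lengthSet H a), (n : ℕ∞)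

/-- The elasticity `ρ(H) = sup { m/n : m, n ∈ L(a), a ∈ H }`. -/
noncomputable def elasticity (H : Submonoid G) : ENNReal :=
  ⨆ (a : G) (_ : a ∈ H) (m : ℕ) (_ : m ∈ lengthSet H a) (n : ℕ) (_ : n ∈ lengthSet H a),
    (m : ENNReal) / (n : ENNReal)

/-- `z` is a factorization of `a`: a multiset of atoms whose product is associated to `a`. -/
def IsFactorization (H : Submonoid G) (a : G) (z : Multiset G) : Prop :=
  (∀ v ∈ z, IsHAtom H v) ∧ HAssoc H a z.prod

/-- The distance between two factorizations: cancel a (maximal) common part (up to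
associates) and take the maximum of the lengths of the remaining parts. -/
noncomputable def fdist (H : Submonoid G) (z z' : Multiset G) : ℕ :=
  sInf {N : ℕ | ∃ x x' v w : Multiset G, z = x + v ∧ z' = x' + w ∧
    Multiset.Rel (HAssoc H) x x' ∧ max (Multiset.card v) (Multiset.card w) ≤ N}

/-- `N` is a tame bound for the atom `u`: for every multiple `a` of `u` and every
factorization `z` of `a` there is a factorization `z'` of `a` containing `u`
with `d(z, z') ≤ N`. -/
def TameBound (H : Submonoid G) (u : G) (N : ℕ) : Prop :=
  ∀ a ∈ H, (∃ b ∈ H, a = u * b) → ∀ z : Multiset G, IsFactorization H a z →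
    ∃ z' : Multiset G, IsFactorization H a z' ∧ (∃ v ∈ z', HAssoc H v u) ∧ fdist H z z' ≤ N

/-- `H` is locally tame: `t(u) < ∞` for every atom `u`. -/
def LocallyTame (H : Submonoid G) : Prop :=
  ∀ u : G, IsHAtom H u → ∃ N : ℕ, TameBound H u N

/-- `H` is globally tame: `sup { t(u) : u an atom } < ∞`. -/
def GloballyTame (H : Submonoid G) : Prop :=
  ∃ N : ℕ, ∀ u : G, IsHAtom H u → TameBound H u N

/-- The local tame degree `t(u)` of `u`. -/
noncomputable def tameDeg (H : Submonoid G) (u : G) : ℕ∞ :=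
  sInf {N : ℕ∞ | ∃ n : ℕ, TameBound H u n ∧ N = (n : ℕ∞)}

/-- `N` is an omega bound for `a`: whenever `a` divides a product of elements of `H`,
it divides a subproduct with at most `N` factors. -/
def OmegaBound (H : Submonoid G) (a : G) (N : ℕ) : Prop :=
  ∀ s : Multiset G, (∀ x ∈ s, x ∈ H) → (∃ c ∈ H, s.prod = a * c) →
    ∃ t : Multiset G, t ≤ s ∧ Multiset.card t ≤ N ∧ ∃ c ∈ H, t.prod = a * c

/-- The omega invariant `ω(a)`. -/
noncomputable def omegaDeg (H : Submonoid G) (a : G) : ℕ∞ :=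
  sInf {N : ℕ∞ | ∃ n : ℕ, OmegaBound H a n ∧ N = (n : ℕ∞)}

/-- `M(x)`: the smallest `n ≥ 1` with `mⁿ ⊆ xH`. -/
noncomputable def Mdeg (H : Submonoid G) (x : G) : ℕ :=
  sInf {n : ℕ | 0 < n ∧ nonUnits H ^ n ⊆ x • (H : Set G)}

/-- The complete integral closure `Ĥ` of `H` (inside the quotient group). -/
def hatH (H : Submonoid G) : Set G := {x | ∃ c ∈ H, ∀ n : ℕ, c * x ^ n ∈ H}

/-- The set of non-units of `Ĥ`. -/
def hatNonUnits (H : Submonoid G) : Set G := {x | x ∈ hatH H ∧ x⁻¹ ∉ hatH H}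

/-- The root closure `H̃` of `H`. -/
def tildeH (H : Submonoid G) : Set G := {x | ∃ n : ℕ, 0 < n ∧ x ^ n ∈ H}

/-- The set of non-units of `H̃`. -/
def tildeNonUnits (H : Submonoid G) : Set G := {x | x ∈ tildeH H ∧ x⁻¹ ∉ tildeH H}

/-- The seminormal closure `H'` of `H`. -/
def seminormalClosure (H : Submonoid G) : Set G :=
  {x | ∃ N : ℕ, ∀ n : ℕ, N ≤ n → x ^ n ∈ H}

/-- The conductor `(H : Ĥ)`. -/
def conductorH (H : Submonoid G) : Set G := {z | ∀ x ∈ hatH H, z * x ∈ H}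

/-- `Ĥ` is a primary monoid. -/
def HatPrimary (H : Submonoid G) : Prop :=
  (hatNonUnits H).Nonempty ∧
    ∀ a ∈ hatNonUnits H, ∀ b ∈ hatNonUnits H,
      ∃ n : ℕ, 0 < n ∧ ∃ c ∈ hatH H, b ^ n = a * c

/-- `Ĥ` is a valuation monoid. -/
def HatValuation (H : Submonoid G) : Prop :=
  ∀ a ∈ hatH H, ∀ b ∈ hatH H,
    (∃ c ∈ hatH H, b = a * c) ∨ (∃ c ∈ hatH H, a = b * c)

/-- `H` is atomic. -/
def Atomic (H : Submonoid G) : Prop :=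
  ∀ a ∈ nonUnits H, ∃ s : Multiset G, (∀ v ∈ s, IsHAtom H v) ∧ a = s.prod

/-- `H` is a discrete valuation monoid, i.e. `H_red ≅ (ℕ₀, +)`. -/
def IsDiscreteValuationMonoid (H : Submonoid G) : Prop :=
  ∃ p ∈ H, ¬ IsHUnit H p ∧ ∀ a ∈ H, ∃ n : ℕ, ∃ ε : G, IsHUnit H ε ∧ a = ε * p ^ n

end MonoidDefs


section Aux

variable {G : Type*} [CommGroup G] {H : Submonoid G}

lemma isHUnit_one' : IsHUnit H 1 := ⟨H.one_mem, by simpa using H.one_mem⟩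

lemma IsHUnit.mul' {a b : G} (ha : IsHUnit H a) (hb : IsHUnit H b) : IsHUnit H (a * b) :=
  ⟨H.mul_mem ha.1 hb.1, by rw [mul_inv]; exact H.mul_mem ha.2 hb.2⟩

lemma hassoc_refl' (a : G) : HAssoc H a a := by
  simpa [HAssoc, div_self'] using (isHUnit_one' : IsHUnit H 1)

lemma multiset_prod_mem_pow (S : Set G) :
    ∀ (s : Multiset G), (∀ x ∈ s, x ∈ S) → s.prod ∈ S ^ (Multiset.card s) := by
  intro s
  induction s using Multiset.induction_on with
  | empty => intro _; simp [Set.mem_one]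
  | cons a s ih =>
    intro h
    rw [Multiset.prod_cons, Multiset.card_cons, pow_succ, mul_comm a s.prod]
    exact Set.mul_mem_mul (ih fun x hx => h x (Multiset.mem_cons_of_mem hx))
      (h a (Multiset.mem_cons_self a s))

lemma prod_isHUnit : ∀ (s : Multiset G), (∀ x ∈ s, IsHUnit H x) → IsHUnit H s.prod := by
  intro s
  induction s using Multiset.induction_on with
  | empty => intro _; simpa using (isHUnit_one' : IsHUnit H 1)
  | cons a s ih =>
    intro h
    rw [Multiset.prod_cons]
    exact (h a (Multiset.mem_cons_self a s)).mul'
      (ih fun x hx => h x (Multiset.mem_cons_of_mem hx))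

lemma exists_sub_multiset : ∀ (s : Multiset G) (n : ℕ), n ≤ Multiset.card s →
    ∃ t : Multiset G, t ≤ s ∧ Multiset.card t = n := by
  intro s
  induction s using Multiset.induction_on with
  | empty => intro n hn; simp at hn; exact ⟨0, le_rfl, by simp [hn]⟩
  | cons a s ih =>
    intro n hn
    cases n with
    | zero => exact ⟨0, zero_le, rfl⟩
    | succ m =>
      obtain ⟨t, ht, hc⟩ := ih m (by simpa using hn)
      exact ⟨a ::ₘ t, Multiset.cons_le_cons a ht, by simp [hc]⟩

lemma mem_smul_H {a x : G} : x ∈ a • (H : Set G) ↔ ∃ h ∈ H, x = a * h := by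
  constructor
  · rintro ⟨y, hy, rfl⟩
    exact ⟨y, hy, rfl⟩
  · rintro ⟨h, hh, rfl⟩
    exact ⟨h, hh, rfl⟩

lemma bounded_decomp (hsp : IsStronglyPrimary H) {a : G} (ha : a ∈ nonUnits H) :
    ∃ n : ℕ, ∀ s : Multiset G, (∀ x ∈ s, x ∈ nonUnits H) → a = s.prod →
      Multiset.card s ≤ n := by
  classical
  obtain ⟨n, hn, hsub⟩ := hsp.2 a ha
  refine ⟨n, fun s hs hprod => ?_⟩
  by_contra hlt
  push_neg at hlt
  obtain ⟨t, htle, htc⟩ := exists_sub_multiset s n (le_of_lt hlt)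
  have htmem : t.prod ∈ a • (H : Set G) := by
    apply hsub
    rw [← htc]
    exact multiset_prod_mem_pow _ t (fun x hx => hs x (Multiset.mem_of_le htle hx))
  obtain ⟨h, hh, hth⟩ := mem_smul_H.mp htmem
  have hsplit : s - t + t = s := tsub_add_cancel_of_le htle
  have hprod2 : a = (s - t).prod * (a * h) := by
    rw [← hth, ← Multiset.prod_add, hsplit, hprod]
  have hone : (s - t).prod * h = 1 := by
    have h3 : a * ((s - t).prod * h) = a * 1 := by
      rw [mul_one, mul_left_comm]; exact hprod2.symm
    exact mul_left_cancel h3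
  have hcard : 0 < Multiset.card (s - t) := by
    rw [Multiset.card_sub htle, htc]
    omega
  obtain ⟨x, hx⟩ := Multiset.card_pos_iff_exists_mem.mp hcard
  have hxs : x ∈ s := Multiset.mem_of_le (Multiset.sub_le_self s t) hx
  have hxne : x ∈ nonUnits H := hs x hxs
  apply hxne.2
  have hxsplit : x ::ₘ (s - t).erase x = s - t := Multiset.cons_erase hx
  have hone' : x * (((s - t).erase x).prod * h) = 1 := by
    rw [← mul_assoc, ← Multiset.prod_cons, hxsplit]; exact hone
  have hxinv : x⁻¹ = ((s - t).erase x).prod * h := inv_eq_of_mul_eq_one_right hone'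
  rw [hxinv]
  refine H.mul_mem (H.multiset_prod_mem _ fun y hy => ?_) hh
  exact (hs y (Multiset.mem_of_le (Multiset.sub_le_self s t)
    (Multiset.mem_of_le (Multiset.erase_le x _) hy))).1


lemma mem_nonUnits {a : G} (ha : a ∈ H) (hna : ¬ IsHUnit H a) : a ∈ nonUnits H :=
  ⟨ha, fun h => hna ⟨ha, h⟩⟩

lemma exists_factorization (hsp : IsStronglyPrimary H) {c : G} (hc : c ∈ H) :
    ∃ z : Multiset G, (∀ v ∈ z, IsHAtom H v) ∧ HAssoc H c z.prod := by
  by_cases hu : IsHUnit H c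
  · exact ⟨0, by simp, by simpa [HAssoc] using hu⟩
  classical
  have hcn : c ∈ nonUnits H := mem_nonUnits hc hu
  obtain ⟨n, hbd⟩ := bounded_decomp hsp hcn
  set K : Set ℕ := {k | ∃ s : Multiset G, Multiset.card s = k ∧
    (∀ x ∈ s, x ∈ nonUnits H) ∧ c = s.prod} with hK
  have hKne : K.Nonempty := ⟨1, {c}, by simp, by simpa using hcn, by simp⟩
  have hKbd : BddAbove K := by
    refine ⟨n, fun k hk => ?_⟩
    obtain ⟨s, hcard, hmem, hprod⟩ := hk
    exact hcard ▸ hbd s hmem hprod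
  have hmax : sSup K ∈ K := Nat.sSup_mem hKne hKbd
  obtain ⟨s, hcard, hmem, hprod⟩ := hmax
  refine ⟨s, fun v hv => ?_, by rw [← hprod]; exact hassoc_refl' c⟩
  have hvn := hmem v hv
  refine ⟨hvn.1, fun h => hvn.2 h.2, fun b d hb hd hbd' => ?_⟩
  by_contra hcon
  push_neg at hcon
  have hbn : b ∈ nonUnits H := mem_nonUnits hb hcon.1
  have hdn : d ∈ nonUnits H := mem_nonUnits hd hcon.2
  have hsplit : v ::ₘ s.erase v = s := Multiset.cons_erase hv
  have hnew : sSup K + 1 ∈ K := by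
    have h1 : 0 < Multiset.card s := Multiset.card_pos_iff_exists_mem.mpr ⟨v, hv⟩
    refine ⟨b ::ₘ d ::ₘ s.erase v, by
      rw [Multiset.card_cons, Multiset.card_cons, Multiset.card_erase_of_mem hv,
        Nat.pred_eq_sub_one]
      omega, ?_, ?_⟩
    · intro x hx
      rcases Multiset.mem_cons.mp hx with rfl | hx
      · exact hbn
      rcases Multiset.mem_cons.mp hx with rfl | hx
      · exact hdn
      · exact hmem x (Multiset.mem_of_le (Multiset.erase_le v s) hx)
    · have h2 : v * (s.erase v).prod = s.prod := Multiset.prod_erase hv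
      rw [Multiset.prod_cons, Multiset.prod_cons, ← mul_assoc, ← hbd', h2]
      exact hprod
  have := le_csSup hKbd hnew
  omega

lemma exists_omegaBound (hsp : IsStronglyPrimary H) {u : G} (hu : IsHAtom H u) :
    ∃ n : ℕ, OmegaBound H u n := by
  classical
  have hun : u ∈ nonUnits H := mem_nonUnits hu.1 hu.2.1
  obtain ⟨n, hn, hsub⟩ := hsp.2 u hun
  refine ⟨n, fun s hs hdiv => ?_⟩
  set s₁ := s.filter (fun x => x ∈ nonUnits H) with hs₁
  set s₂ := s.filter (fun x => ¬ x ∈ nonUnits H) with hs₂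
  have hadd : s₁ + s₂ = s := Multiset.filter_add_not _ s
  by_cases hcase : n ≤ Multiset.card s₁
  · obtain ⟨t, htle, htc⟩ := exists_sub_multiset s₁ n hcase
    have htprod : t.prod ∈ u • (H : Set G) := by
      apply hsub
      rw [← htc]
      refine multiset_prod_mem_pow _ t (fun x hx => ?_)
      exact Multiset.of_mem_filter (Multiset.mem_of_le htle hx)
    obtain ⟨h, hh, hth⟩ := mem_smul_H.mp htprod
    exact ⟨t, le_trans htle (Multiset.filter_le _ s), htc ▸ le_rfl, h, hh, hth⟩
  · obtain ⟨c, hc, hcprod⟩ := hdiv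
    have hs₂u : IsHUnit H s₂.prod := by
      refine prod_isHUnit s₂ (fun x hx => ?_)
      have hxs : x ∈ s := Multiset.mem_of_le (Multiset.filter_le _ s) hx
      have hxH : x ∈ H := hs x hxs
      have := Multiset.of_mem_filter hx
      exact ⟨hxH, by_contra fun hni => this ⟨hxH, hni⟩⟩
    refine ⟨s₁, Multiset.filter_le _ s, by omega, c * (s₂.prod)⁻¹,
      H.mul_mem hc hs₂u.2, ?_⟩
    have : s₁.prod * s₂.prod = u * c := by rw [← Multiset.prod_add, hadd, hcprod]
    calc s₁.prod = s₁.prod * s₂.prod * (s₂.prod)⁻¹ := by group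
      _ = u * (c * (s₂.prod)⁻¹) := by rw [this, mul_assoc]

lemma not_omegaBound_zero {u : G} (hu : IsHAtom H u) : ¬ OmegaBound H u 0 := by
  intro h
  obtain ⟨t, htle, htc, c, hc, htprod⟩ := h {u} (by simpa using hu.1) ⟨1, H.one_mem, by simp⟩
  rw [Multiset.card_eq_zero.mp (Nat.le_zero.mp htc)] at htprod
  simp only [Multiset.prod_zero] at htprod
  exact hu.2.1 ⟨hu.1, by rw [inv_eq_of_mul_eq_one_right htprod.symm]; exact hc⟩

lemma omega_spec (hsp : IsStronglyPrimary H) {u : G} (hu : IsHAtom H u) :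
    ∃ ω : ℕ, 1 ≤ ω ∧ OmegaBound H u ω ∧ omegaDeg H u = (ω : ℕ∞) := by
  classical
  have hex := exists_omegaBound hsp hu
  refine ⟨Nat.find hex, ?_, Nat.find_spec hex, ?_⟩
  · rcases Nat.eq_zero_or_pos (Nat.find hex) with h | h
    · exact absurd (h ▸ Nat.find_spec hex) (not_omegaBound_zero hu)
    · exact h
  · apply le_antisymm
    · exact sInf_le ⟨_, Nat.find_spec hex, rfl⟩
    · refine le_sInf fun N hN => ?_
      obtain ⟨m, hm, rfl⟩ := hN
      exact_mod_cast Nat.find_min' _ hm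

lemma le_rho {a : G} (ha : a ∈ H) {m k : ℕ} (hm : m ∈ lengthSet H a)
    (hk : k ∈ lengthSet H a) : (m : ℕ∞) ≤ rho H (k : ℕ∞) := by
  rw [rho]
  exact le_iSup_of_le a <| le_iSup_of_le ha <| le_iSup_of_le ⟨k, hk, rfl⟩ <|
    le_iSup_of_le m <| le_iSup_of_le hm le_rfl

lemma key_tame (hsp : IsStronglyPrimary H) {u : G} (hu : IsHAtom H u) {R : ℕ}
    (hR : rho H (omegaDeg H u) = (R : ℕ∞)) : TameBound H u R := by
  classical
  obtain ⟨ω, hω1, hωB, hωeq⟩ := omega_spec hsp hu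
  rw [hωeq] at hR
  -- ω ≤ R
  have hωL : ω ∈ lengthSet H (u ^ ω) := by
    refine ⟨Multiset.replicate ω u, by simp, fun v hv => ?_, ?_⟩
    · rw [Multiset.eq_of_mem_replicate hv]; exact hu
    · rw [Multiset.prod_replicate]; exact hassoc_refl' _
  have hωR : ω ≤ R := by
    have := le_rho (H.pow_mem hu.1 ω) hωL hωL
    rw [hR] at this
    exact_mod_cast this
  intro a ha hdvd z hz
  obtain ⟨b, hb, hab⟩ := hdvd
  obtain ⟨hzat, hzas⟩ := hz
  have hε : IsHUnit H (a / z.prod) := hzas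
  have hzprod : ∃ c ∈ H, z.prod = u * c := by
    refine ⟨b * (a / z.prod)⁻¹, H.mul_mem hb hε.2, ?_⟩
    rw [hab]
    apply Additive.ofMul.injective
    simp only [ofMul_mul, ofMul_div, ofMul_pow, ofMul_inv]
    abel
  obtain ⟨t, htle, htc, c, hc, htprod⟩ := hωB z (fun x hx => (hzat x hx).1) hzprod
  set k := Multiset.card t with hk
  obtain ⟨zc, hzcat, hzcas⟩ := exists_factorization hsp hc
  have hδ : IsHUnit H (c / zc.prod) := hzcas
  -- the auxiliary element a' and its two factorizations
  set a' : G := t.prod * u ^ (ω - k) with ha'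
  have ha'H : a' ∈ H := by
    rw [ha', htprod]
    exact H.mul_mem (H.mul_mem hu.1 hc) (H.pow_mem hu.1 _)
  have htat : ∀ v ∈ t, IsHAtom H v := fun v hv => hzat v (Multiset.mem_of_le htle hv)
  have hωL' : ω ∈ lengthSet H a' := by
    refine ⟨t + Multiset.replicate (ω - k) u, by simp [← hk]; omega, fun v hv => ?_, ?_⟩
    · rcases Multiset.mem_add.mp hv with hv | hv
      · exact htat v hv
      · rw [Multiset.eq_of_mem_replicate hv]; exact hu
    · rw [Multiset.prod_add, Multiset.prod_replicate]
      exact hassoc_refl' _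
  have hmL' : (1 + Multiset.card zc + (ω - k)) ∈ lengthSet H a' := by
    refine ⟨u ::ₘ (zc + Multiset.replicate (ω - k) u), by simp; omega, fun v hv => ?_, ?_⟩
    · rcases Multiset.mem_cons.mp hv with rfl | hv
      · exact hu
      rcases Multiset.mem_add.mp hv with hv | hv
      · exact hzcat v hv
      · rw [Multiset.eq_of_mem_replicate hv]; exact hu
    · show IsHUnit H _
      have : a' / (u ::ₘ (zc + Multiset.replicate (ω - k) u)).prod = c / zc.prod := by
        rw [Multiset.prod_cons, Multiset.prod_add, Multiset.prod_replicate, ha', htprod]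
        apply Additive.ofMul.injective
        simp only [ofMul_mul, ofMul_div, ofMul_pow, ofMul_inv]
        abel
      rw [this]
      exact hδ
  have hlen : 1 + Multiset.card zc ≤ R := by
    have := le_rho ha'H hmL' hωL'
    rw [hR] at this
    have h2 : 1 + Multiset.card zc + (ω - k) ≤ R := by exact_mod_cast this
    omega
  -- the new factorization z'
  refine ⟨(z - t) + (u ::ₘ zc), ⟨fun v hv => ?_, ?_⟩, ⟨u, ?_, hassoc_refl' u⟩, ?_⟩
  · rcases Multiset.mem_add.mp hv with hv | hv
    · exact hzat v (Multiset.mem_of_le (Multiset.sub_le_self z t) hv)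
    rcases Multiset.mem_cons.mp hv with rfl | hv
    · exact hu
    · exact hzcat v hv
  · show IsHUnit H _
    have hzsplit : (z - t).prod * t.prod = z.prod := by
      rw [← Multiset.prod_add, tsub_add_cancel_of_le htle]
    have heq : a / ((z - t) + (u ::ₘ zc)).prod = (a / z.prod) * (c / zc.prod) := by
      rw [Multiset.prod_add, Multiset.prod_cons, ← hzsplit, htprod]
      apply Additive.ofMul.injective
      simp only [ofMul_mul, ofMul_div, ofMul_pow, ofMul_inv]
      abel
    rw [heq]
    exact hε.mul' hδ
  · exact Multiset.mem_add.mpr (Or.inr (Multiset.mem_cons_self u zc))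
  · apply le_trans (Nat.sInf_le _) (le_refl R)
    refine ⟨z - t, z - t, t, u ::ₘ zc, (tsub_add_cancel_of_le htle).symm, rfl,
      Multiset.rel_refl_of_refl_on (fun x _ => hassoc_refl' x), ?_⟩
    simp only [Multiset.card_cons]
    exact max_le (le_trans htc hωR) (by omega)

end Aux

/-- Let `H` be a strongly primary monoid. For every atom `u ∈ H` we
have `t(u) ≤ ρ_{ω(u)}(H)`; hence if `ρ_{ω(u)}(H) < ∞` for every atom `u`, then `H` is
locally tame. -/
theorem stmt12 {G : Type*} [CommGroup G] (H : Submonoid G) (hq : IsQuotientGroup H)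
    (hsp : IsStronglyPrimary H) :
    (∀ u : G, IsHAtom H u → tameDeg H u ≤ rho H (omegaDeg H u)) ∧
    ((∀ u : G, IsHAtom H u → rho H (omegaDeg H u) < ⊤) → LocallyTame H) := by
  constructor
  · intro u hu
    rcases eq_or_ne (rho H (omegaDeg H u)) ⊤ with h | h
    · rw [h]; exact le_top
    · obtain ⟨R, hR⟩ := WithTop.ne_top_iff_exists.mp h
      have hkey := key_tame hsp hu hR.symm
      calc tameDeg H u ≤ (R : ℕ∞) := sInf_le ⟨R, hkey, rfl⟩
        _ = _ := hR
  · intro hfin u hu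
    obtain ⟨R, hR⟩ := WithTop.ne_top_iff_exists.mp (hfin u hu).ne
    exact ⟨R, key_tame hsp hu hR.symm⟩
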